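/- Let (S, A) be a partial affine plane of order n (n ≥ 2) with b = n² − a lines, where 1 ≤ a ≤ n − 1, and suppose no point has valency n + 1. Then for every line ℓ ∈ A, the number of lines of A parallel to ℓ (including ℓ itself) is at least n − a. -/
import Mathlib


open Finset

/-- The valency of a point `X`: the number of lines of `B` containing `X`. -/
def valency {α : Type*} [DecidableEq α] (B : Finset (Finset α)) (X : α) : ℕ :=
  (B.filter (fun L => X ∈ L)).card

/-- in a partial affine plane of order n with n² − a lines (1 ≤ a ≤ n − 1)
and no point of valency n + 1, every line is parallel to at least n − a lines
(including itself). -/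
theorem stmt_6 {α : Type*} [DecidableEq α] (n a : ℕ) (hn : 2 ≤ n)
    (ha1 : 1 ≤ a) (ha2 : a ≤ n - 1)
    (S : Finset α) (A : Finset (Finset α))
    (hS : S.card = n ^ 2)
    (hlines : ∀ L ∈ A, L ⊆ S ∧ L.card = n)
    (hmeet : ∀ L ∈ A, ∀ M ∈ A, L ≠ M → (L ∩ M).card ≤ 1)
    (hb : A.card = n ^ 2 - a)
    (hnofull : ∀ P ∈ S, valency A P ≠ n + 1) :
    ∀ ℓ ∈ A, n - a ≤ (A.filter (fun m => m = ℓ ∨ m ∩ ℓ = ∅)).card := by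
  classical
  -- Every point has valency at most n.
  have hval : ∀ P ∈ S, valency A P ≤ n := by
    intro P hP
    have hle : valency A P ≤ n + 1 := by
      set T := A.filter (fun L => P ∈ L) with hT
      have hdisj : ∀ L ∈ T, ∀ M ∈ T, L ≠ M → Disjoint (L.erase P) (M.erase P) := by
        intro L hL M hM hne
        rw [hT, mem_filter] at hL hM
        refine Finset.disjoint_left.mpr ?_
        intro x hxL hxM
        have hx : x ∈ L ∩ M := mem_inter.mpr ⟨mem_of_mem_erase hxL, mem_of_mem_erase hxM⟩
        have hP' : P ∈ L ∩ M := mem_inter.mpr ⟨hL.2, hM.2⟩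
        have hcard := hmeet L hL.1 M hM.1 hne
        have hxP : x = P := by
          by_contra hxP
          have : 1 < (L ∩ M).card := Finset.one_lt_card.mpr ⟨x, hx, P, hP', hxP⟩
          omega
        exact (Finset.ne_of_mem_erase hxL) hxP
      have hsub : T.biUnion (fun L => L.erase P) ⊆ S.erase P := by
        intro x hx
        rcases Finset.mem_biUnion.mp hx with ⟨L, hL, hxL⟩
        rw [hT, mem_filter] at hL
        exact Finset.mem_erase.mpr
          ⟨Finset.ne_of_mem_erase hxL, (hlines L hL.1).1 (mem_of_mem_erase hxL)⟩
      have hcard1 : (T.biUnion (fun L => L.erase P)).card = ∑ L ∈ T, (L.erase P).card :=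
        Finset.card_biUnion hdisj
      have hcard2 : ∑ L ∈ T, (L.erase P).card = T.card * (n - 1) := by
        rw [Finset.sum_congr rfl (fun L hL => ?_), Finset.sum_const, smul_eq_mul]
        rw [hT, mem_filter] at hL
        rw [Finset.card_erase_of_mem hL.2, (hlines L hL.1).2]
      have hSP : (S.erase P).card = n ^ 2 - 1 := by
        rw [Finset.card_erase_of_mem hP, hS]
      have hfin : T.card * (n - 1) ≤ n ^ 2 - 1 := by
        rw [← hcard2, ← hcard1, ← hSP]
        exact Finset.card_le_card hsub
      have hfac : (n + 1) * (n - 1) = n ^ 2 - 1 := by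
        obtain ⟨k, rfl⟩ := Nat.exists_eq_add_of_le hn
        have h1 : 2 + k - 1 = k + 1 := by omega
        rw [h1]
        have h2 : (2 + k + 1) * (k + 1) = k ^ 2 + 4 * k + 3 := by ring
        have h3 : (2 + k) ^ 2 = k ^ 2 + 4 * k + 4 := by ring
        omega
      have hpos : 0 < n - 1 := by omega
      have hfin' : T.card * (n - 1) ≤ (n + 1) * (n - 1) := by rw [hfac]; exact hfin
      exact Nat.le_of_mul_le_mul_right hfin' hpos
    have := hnofull P hP
    omega
  intro ℓ hℓ
  set par := A.filter (fun m => m = ℓ ∨ m ∩ ℓ = ∅) with hpar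
  set npar := A.filter (fun m => ¬(m = ℓ ∨ m ∩ ℓ = ∅)) with hnpar
  have hsplit : par.card + npar.card = A.card :=
    Finset.card_filter_add_card_filter_not _
  have hnsub : npar ⊆ ℓ.biUnion (fun P => A.filter (fun m => P ∈ m ∧ m ≠ ℓ)) := by
    intro m hm
    rw [hnpar, mem_filter, not_or] at hm
    obtain ⟨hmA, hne, hint⟩ := hm
    obtain ⟨P, hP⟩ := Finset.nonempty_iff_ne_empty.mpr hint
    rw [mem_inter] at hP
    exact Finset.mem_biUnion.mpr ⟨P, hP.2, mem_filter.mpr ⟨hmA, hP.1, hne⟩⟩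
  have hbound : npar.card ≤ ℓ.card * (n - 1) := by
    calc npar.card ≤ (ℓ.biUnion (fun P => A.filter (fun m => P ∈ m ∧ m ≠ ℓ))).card :=
          Finset.card_le_card hnsub
      _ ≤ ∑ P ∈ ℓ, (A.filter (fun m => P ∈ m ∧ m ≠ ℓ)).card := Finset.card_biUnion_le
      _ ≤ ∑ P ∈ ℓ, (n - 1) := Finset.sum_le_sum (fun P hP => by
          have hPS : P ∈ S := (hlines ℓ hℓ).1 hP
          have h1 : A.filter (fun m => P ∈ m ∧ m ≠ ℓ) ⊆ (A.filter (fun m => P ∈ m)).erase ℓ := by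
            intro m hm
            rw [mem_filter] at hm
            exact Finset.mem_erase.mpr ⟨hm.2.2, mem_filter.mpr ⟨hm.1, hm.2.1⟩⟩
          have h2 : ((A.filter (fun m => P ∈ m)).erase ℓ).card = valency A P - 1 := by
            rw [Finset.card_erase_of_mem (mem_filter.mpr ⟨hℓ, hP⟩)]; rfl
          have h3 := Finset.card_le_card h1
          have h4 := hval P hPS
          omega)
      _ = ℓ.card * (n - 1) := by rw [Finset.sum_const, smul_eq_mul]
  have hlcard : ℓ.card = n := (hlines ℓ hℓ).2
  rw [hlcard] at hbound
  have hmul : n ^ 2 = n * (n - 1) + n := by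
    obtain ⟨k, rfl⟩ := Nat.exists_eq_add_of_le hn
    have h1 : 2 + k - 1 = k + 1 := by omega
    rw [h1]
    ring
  rw [hb] at hsplit
  omega
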